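/- Let z, w ∈ ℂ with |z| ≠ 1, and let f, m̂ ∈ ℝ. If (z,w) lies on the m̂-energy level of the spherical Hooke problem with stiffness f in the stereographic chart, i.e., (1+|z|²)²|w|²/8 + 4f|z|²/(1−|z|²)² = m̂, then the same pair (z,w) lies on the m̂-energy level of the hyperbolic Hooke problem with stiffness f + m̂ in the Poincaré-disc chart: (1−|z|²)²|w|²/8 + 4(f+m̂)|z|²/(1+|z|²)² = m̂. Thus the spherical and hyperbolic Hooke problems are in correspondence on fixed energy levels (up to a time reparametrization by the positive factor (1−|z|²)²/(1+|z|²)²). -/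

import Mathlib

noncomputable section

/-- The spherical and hyperbolic Hooke problems are in correspondence on fixed
energy levels: a point of the `m̂`-energy level of the spherical Hooke problem
with stiffness `f` in the stereographic chart lies on the `m̂`-energy level of
the hyperbolic Hooke problem with stiffness `f + m̂` in the Poincaré-disc
chart. -/
theorem spherical_hooke_to_hyperbolic_hooke_energy_levels
    (z w : ℂ) (hz1 : ‖z‖ ≠ 1) (f mhat : ℝ)
    (h : (1 + ‖z‖ ^ 2) ^ 2 * ‖w‖ ^ 2 / 8
        + 4 * f * ‖z‖ ^ 2 / (1 - ‖z‖ ^ 2) ^ 2 = mhat) :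
    (1 - ‖z‖ ^ 2) ^ 2 * ‖w‖ ^ 2 / 8
        + 4 * (f + mhat) * ‖z‖ ^ 2 / (1 + ‖z‖ ^ 2) ^ 2 = mhat := by
  set a := ‖z‖ with ha
  have h1 : (1 - a ^ 2) ≠ 0 := by
    intro hc
    apply hz1
    nlinarith [norm_nonneg z, sq_nonneg (a - 1), sq_nonneg (a + 1)]
  have h2 : (1 + a ^ 2) ≠ 0 := by positivity
  field_simp at h ⊢
  nlinarith [h, sq_nonneg a, sq_nonneg (1 - a^2), sq_nonneg (1 + a^2)]
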